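/- Weber's second exponential integral: for real s > 0, real r₁, r₂ > 0, and integer ν ≥ 0, ∫_0^∞ e^{-sλ²}·J_ν(λr₁)·J_ν(λr₂)·λ dλ = (1/(2s))·exp(-(r₁² + r₂²)/(4s))·I_ν(r₁r₂/(2s)). -/

import Mathlib

open MeasureTheory Set

set_option maxHeartbeats 1000000

/-- The Bessel function of the first kind of real order `ν`, defined by its power
series (for `x ≥ 0`, using real powers). -/
noncomputable def besselJ (ν x : ℝ) : ℝ :=
  ∑' j : ℕ, (-1 : ℝ) ^ j / (j.factorial * Real.Gamma (ν + j + 1)) *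
    (x / 2) ^ (ν + 2 * (j : ℝ))

/-- The modified Bessel function of the first kind of real order `ν`. -/
noncomputable def besselI (ν x : ℝ) : ℝ :=
  ∑' j : ℕ, 1 / (j.factorial * Real.Gamma (ν + j + 1)) * (x / 2) ^ (ν + 2 * (j : ℝ))

lemma besselJ_nat (ν : ℕ) (a : ℝ) :
    besselJ ν a = ∑' j : ℕ, (-1 : ℝ) ^ j / (j.factorial * (ν + j).factorial) *
      (a / 2) ^ (ν + 2 * j) := by
  unfold besselJ
  refine tsum_congr fun j => ?_
  have h1 : ((ν : ℝ) + j + 1) = ((ν + j : ℕ) : ℝ) + 1 := by push_cast; ring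
  have h2 : ((ν : ℝ) + 2 * (j : ℝ)) = ((ν + 2 * j : ℕ) : ℝ) := by push_cast; ring
  rw [h1, h2, Real.Gamma_nat_eq_factorial, Real.rpow_natCast]

lemma besselI_nat (ν : ℕ) (a : ℝ) :
    besselI ν a = ∑' j : ℕ, 1 / ((j.factorial : ℝ) * (ν + j).factorial) *
      (a / 2) ^ (ν + 2 * j) := by
  unfold besselI
  refine tsum_congr fun j => ?_
  have h1 : ((ν : ℝ) + j + 1) = ((ν + j : ℕ) : ℝ) + 1 := by push_cast; ring
  have h2 : ((ν : ℝ) + 2 * (j : ℝ)) = ((ν + 2 * j : ℕ) : ℝ) := by push_cast; ring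
  rw [h1, h2, Real.Gamma_nat_eq_factorial, Real.rpow_natCast]

lemma bessel_summable_norm (ν : ℕ) (e : ℕ → ℝ) (he : ∀ j, |e j| = 1) (t : ℝ) :
    Summable fun j : ℕ => ‖e j / ((j.factorial : ℝ) * (ν + j).factorial) * t ^ (ν + 2 * j)‖ := by
  refine Summable.of_nonneg_of_le (fun _ => norm_nonneg _) (fun j => ?_)
    ((Real.summable_pow_div_factorial (t ^ 2)).mul_left (|t| ^ ν))
  have h1 : (1 : ℝ) ≤ ((ν + j).factorial : ℝ) := by
    exact_mod_cast Nat.one_le_iff_ne_zero.2 (Nat.factorial_ne_zero _)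
  have h2 : (0 : ℝ) < (j.factorial : ℝ) := by exact_mod_cast Nat.factorial_pos _
  rw [norm_mul, norm_div, Real.norm_eq_abs, he j, Real.norm_eq_abs, Real.norm_eq_abs,
    abs_mul, abs_pow]
  rw [abs_of_nonneg (Nat.cast_nonneg _), abs_of_nonneg (Nat.cast_nonneg _)]
  have h3 : |t| ^ (ν + 2 * j) = |t| ^ ν * (t ^ 2) ^ j := by
    rw [pow_add, pow_mul, sq_abs]
  rw [h3, div_mul_eq_mul_div, one_mul, ← mul_div_assoc]
  gcongr
  nlinarith [h1, h2, (show (0:ℝ) ≤ (j.factorial:ℝ) from Nat.cast_nonneg _)]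


lemma moment_integrableOn {s : ℝ} (hs : 0 < s) (n : ℕ) :
    IntegrableOn (fun l : ℝ => Real.exp (-s * l ^ 2) * l ^ n) (Ioi 0) := by
  have hn : (-1 : ℝ) < (n : ℝ) := by
    have h0 : (0:ℝ) ≤ (n : ℝ) := Nat.cast_nonneg n
    linarith
  have h := integrableOn_rpow_mul_exp_neg_mul_sq (s := (n : ℝ)) hs hn
  refine h.congr_fun (fun x hx => ?_) measurableSet_Ioi
  beta_reduce
  rw [Real.rpow_natCast, mul_comm]

lemma moment_eq {s : ℝ} (hs : 0 < s) (m : ℕ) :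
    ∫ l in Ioi (0 : ℝ), Real.exp (-s * l ^ 2) * l ^ (2 * m + 1) =
      (m.factorial : ℝ) / (2 * s ^ (m + 1)) := by
  have hq : (-1 : ℝ) < ((2 * m + 1 : ℕ) : ℝ) := by
    have h0 : (0:ℝ) ≤ ((2 * m + 1 : ℕ) : ℝ) := Nat.cast_nonneg _
    linarith
  have h := integral_rpow_mul_exp_neg_mul_rpow (p := 2) (q := ((2 * m + 1 : ℕ) : ℝ))
    (b := s) (by norm_num) hq hs
  have hL : (∫ x in Ioi (0 : ℝ), x ^ ((2 * m + 1 : ℕ) : ℝ) * Real.exp (-s * x ^ (2 : ℝ)))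
      = ∫ l in Ioi (0 : ℝ), Real.exp (-s * l ^ 2) * l ^ (2 * m + 1) := by
    refine setIntegral_congr_fun measurableSet_Ioi (fun x hx => ?_)
    rw [Real.rpow_natCast]
    rw [show (2 : ℝ) = ((2 : ℕ) : ℝ) by norm_num, Real.rpow_natCast, mul_comm]
  rw [hL] at h
  rw [h]
  have h1 : (-(((2 * m + 1 : ℕ) : ℝ) + 1) / 2) = -(((m + 1 : ℕ) : ℝ)) := by push_cast; ring
  have h2 : ((((2 * m + 1 : ℕ) : ℝ)) + 1) / 2 = (m : ℝ) + 1 := by push_cast; ring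
  rw [h1, h2, Real.Gamma_nat_eq_factorial, Real.rpow_neg hs.le, Real.rpow_natCast]
  have hs' : s ≠ 0 := ne_of_gt hs
  have hpow : (s : ℝ) ^ (m + 1) ≠ 0 := pow_ne_zero _ hs'
  field_simp

lemma choose_le_two_pow' (n k : ℕ) : n.choose k ≤ 2 ^ n := by
  rcases le_or_gt k n with h | h
  · calc n.choose k ≤ ∑ m ∈ Finset.range (n + 1), n.choose m :=
      Finset.single_le_sum (fun i _ => Nat.zero_le _) (by simp [Nat.lt_succ_iff, h])
    _ = 2 ^ n := Nat.sum_range_choose n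
  · simp [Nat.choose_eq_zero_of_lt h]

lemma fact_key (ν j k : ℕ) :
    ((ν + j + k).factorial : ℝ) * (j.factorial * k.factorial) ≤
      2 ^ (ν + j + k) * (j.factorial * (ν + j).factorial * k.factorial * (ν + k).factorial) := by
  have hk : k ≤ ν + j + k := Nat.le_add_left _ _
  have h1 : (ν + j + k).choose k * k.factorial * (ν + j).factorial = (ν + j + k).factorial := by
    have := Nat.choose_mul_factorial_mul_factorial hk
    simpa [Nat.add_sub_cancel] using this
  have h2 : (ν + j + k).choose k ≤ 2 ^ (ν + j + k) := choose_le_two_pow' _ _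
  have h3 : k.factorial ≤ (ν + k).factorial := Nat.factorial_le (Nat.le_add_left _ _)
  have key : (ν + j + k).factorial * (j.factorial * k.factorial) ≤
      2 ^ (ν + j + k) * (j.factorial * (ν + j).factorial * k.factorial * (ν + k).factorial) := by
    calc (ν + j + k).factorial * (j.factorial * k.factorial)
        = (ν + j + k).choose k * k.factorial * (ν + j).factorial * (j.factorial * k.factorial) := by
          rw [h1]
      _ ≤ 2 ^ (ν + j + k) * k.factorial * (ν + j).factorial * (j.factorial * (ν + k).factorial) := by
          exact Nat.mul_le_mul (Nat.mul_le_mul (Nat.mul_le_mul_right _ h2) le_rfl)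
            (Nat.mul_le_mul_left _ h3)
      _ = 2 ^ (ν + j + k) * (j.factorial * (ν + j).factorial * k.factorial * (ν + k).factorial) := by
          ring
  exact_mod_cast key

lemma bigSummable (ν : ℕ) {x y : ℝ} (hx : 0 ≤ x) (hy : 0 ≤ y) :
    Summable (fun p : ℕ × ℕ => ((ν + p.1 + p.2).factorial : ℝ) /
      (p.1.factorial * (ν + p.1).factorial * p.2.factorial * (ν + p.2).factorial) *
      x ^ p.1 * y ^ p.2) := by
  have hsum : Summable (fun p : ℕ × ℕ =>
      (2 ^ ν * ((2 * x) ^ p.1 / p.1.factorial)) * ((2 * y) ^ p.2 / p.2.factorial)) :=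
    Summable.mul_of_nonneg ((Real.summable_pow_div_factorial (2 * x)).mul_left _)
      (Real.summable_pow_div_factorial (2 * y))
      (fun j => by positivity) (fun k => by positivity)
  refine Summable.of_nonneg_of_le (fun p => by positivity) (fun p => ?_) hsum
  obtain ⟨j, k⟩ := p
  simp only
  have hd : (0:ℝ) < (j.factorial : ℝ) * (ν + j).factorial * k.factorial * (ν + k).factorial := by
    positivity
  have hjk : (0:ℝ) < (j.factorial : ℝ) * k.factorial := by positivity
  have key : ((ν + j + k).factorial : ℝ) /
      (j.factorial * (ν + j).factorial * k.factorial * (ν + k).factorial) ≤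
      2 ^ (ν + j + k) / (j.factorial * k.factorial) := by
    rw [div_le_div_iff₀ hd hjk]
    calc ((ν + j + k).factorial : ℝ) * (j.factorial * k.factorial)
        ≤ 2 ^ (ν + j + k) * (j.factorial * (ν + j).factorial * k.factorial * (ν + k).factorial) :=
          fact_key ν j k
      _ = 2 ^ (ν + j + k) * (j.factorial * (ν + j).factorial * k.factorial * (ν + k).factorial) := rfl
  calc ((ν + j + k).factorial : ℝ) /
        (j.factorial * (ν + j).factorial * k.factorial * (ν + k).factorial) * x ^ j * y ^ k
      ≤ 2 ^ (ν + j + k) / (j.factorial * k.factorial) * x ^ j * y ^ k := by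
        have := mul_le_mul_of_nonneg_right (mul_le_mul_of_nonneg_right key (pow_nonneg hx j))
          (pow_nonneg hy k)
        exact this
    _ = 2 ^ ν * ((2 * x) ^ j / j.factorial) * ((2 * y) ^ k / k.factorial) := by
        rw [pow_add, pow_add, mul_pow, mul_pow]
        field_simp

lemma vmd (ν j k : ℕ) :
    ∑ m ∈ Finset.range (min j k + 1),
      (1 : ℝ) / ((j - m).factorial * (k - m).factorial * m.factorial * (ν + m).factorial)
    = ((ν + j + k).factorial : ℝ) /
      (j.factorial * k.factorial * (ν + j).factorial * (ν + k).factorial) := by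
  have hstep1 : ∀ m ∈ Finset.range (min j k + 1),
      (1 : ℝ) / ((j - m).factorial * (k - m).factorial * m.factorial * (ν + m).factorial)
      = (k.choose m : ℝ) * ((ν + j).choose (j - m)) / (k.factorial * (ν + j).factorial) := by
    intro m hm
    rw [Finset.mem_range, Nat.lt_succ_iff, le_min_iff] at hm
    obtain ⟨hmj, hmk⟩ := hm
    have hsub : ν + j - (j - m) = ν + m := by omega
    rw [Nat.cast_choose ℝ hmk, Nat.cast_choose ℝ (show j - m ≤ ν + j by omega), hsub]
    have n1 : ((j - m).factorial : ℝ) ≠ 0 := Nat.cast_ne_zero.2 (Nat.factorial_ne_zero _)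
    have n2 : ((k - m).factorial : ℝ) ≠ 0 := Nat.cast_ne_zero.2 (Nat.factorial_ne_zero _)
    have n3 : ((m).factorial : ℝ) ≠ 0 := Nat.cast_ne_zero.2 (Nat.factorial_ne_zero _)
    have n4 : ((ν + m).factorial : ℝ) ≠ 0 := Nat.cast_ne_zero.2 (Nat.factorial_ne_zero _)
    have n5 : ((k).factorial : ℝ) ≠ 0 := Nat.cast_ne_zero.2 (Nat.factorial_ne_zero _)
    have n6 : ((ν + j).factorial : ℝ) ≠ 0 := Nat.cast_ne_zero.2 (Nat.factorial_ne_zero _)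
    field_simp
  rw [Finset.sum_congr rfl hstep1, ← Finset.sum_div]
  have hext : ∑ m ∈ Finset.range (min j k + 1), (k.choose m : ℝ) * ((ν + j).choose (j - m))
      = ∑ m ∈ Finset.range (j + 1), (k.choose m : ℝ) * ((ν + j).choose (j - m)) := by
    apply Finset.sum_subset
    · intro x hx
      rw [Finset.mem_range] at *
      omega
    · intro x hx hnx
      rw [Finset.mem_range] at hx hnx
      have : k < x := by omega
      simp [Nat.choose_eq_zero_of_lt this]
  rw [hext]
  have hnat : ∑ m ∈ Finset.range (j + 1), k.choose m * ((ν + j).choose (j - m))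
      = (k + (ν + j)).choose j := by
    rw [Nat.add_choose_eq, Finset.Nat.sum_antidiagonal_eq_sum_range_succ_mk]
  have hcast : ∑ m ∈ Finset.range (j + 1), (k.choose m : ℝ) * ((ν + j).choose (j - m))
      = ((k + (ν + j)).choose j : ℝ) := by exact_mod_cast congrArg (Nat.cast : ℕ → ℝ) hnat
  rw [hcast, Nat.cast_choose ℝ (show j ≤ k + (ν + j) by omega),
    show k + (ν + j) - j = ν + k by omega, show k + (ν + j) = ν + j + k by omega]
  have n5 : ((k).factorial : ℝ) ≠ 0 := Nat.cast_ne_zero.2 (Nat.factorial_ne_zero _)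
  have n6 : ((ν + j).factorial : ℝ) ≠ 0 := Nat.cast_ne_zero.2 (Nat.factorial_ne_zero _)
  have n7 : ((j).factorial : ℝ) ≠ 0 := Nat.cast_ne_zero.2 (Nat.factorial_ne_zero _)
  have n8 : ((ν + k).factorial : ℝ) ≠ 0 := Nat.cast_ne_zero.2 (Nat.factorial_ne_zero _)
  field_simp

-- scalar identity: per-term evaluation in the triple sum
lemma F_term_eval {x y u : ℝ} (hu2 : u ^ 2 = x * y) (ν a b m : ℕ) :
    (-x) ^ a / a.factorial * ((-y) ^ b / b.factorial) *
      (1 / ((m.factorial : ℝ) * (ν + m).factorial) * u ^ (ν + 2 * m)) =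
    (-1 : ℝ) ^ (a + m + (b + m)) * x ^ (a + m) * y ^ (b + m) * u ^ ν *
      (1 / ((a.factorial : ℝ) * b.factorial * m.factorial * (ν + m).factorial)) := by
  have h1 : u ^ (ν + 2 * m) = u ^ ν * (x * y) ^ m := by rw [pow_add, pow_mul, hu2]
  have h2 : ((-1 : ℝ)) ^ (a + m + (b + m)) = (-1) ^ a * (-1) ^ b := by
    rw [show a + m + (b + m) = a + b + m * 2 by ring, pow_add, pow_add, pow_mul']
    norm_num
  rw [h1, h2]
  have n1 : (a.factorial : ℝ) ≠ 0 := Nat.cast_ne_zero.2 (Nat.factorial_ne_zero _)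
  have n2 : (b.factorial : ℝ) ≠ 0 := Nat.cast_ne_zero.2 (Nat.factorial_ne_zero _)
  have n3 : (m.factorial : ℝ) ≠ 0 := Nat.cast_ne_zero.2 (Nat.factorial_ne_zero _)
  have n4 : ((ν + m).factorial : ℝ) ≠ 0 := Nat.cast_ne_zero.2 (Nat.factorial_ne_zero _)
  field_simp
  ring

-- final scalar identity matching the two tsums termwise
lemma final_term (ν j k : ℕ) {s r₁ r₂ : ℝ} (hs : 0 < s) :
    ((-1 : ℝ)) ^ (j + k) *
      ((r₁ / 2) ^ (ν + 2 * j) * (r₂ / 2) ^ (ν + 2 * k) /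
        ((j.factorial : ℝ) * (ν + j).factorial * k.factorial * (ν + k).factorial)) *
      (((ν + j + k).factorial : ℝ) / (2 * s ^ (ν + j + k + 1)))
    = 1 / (2 * s) * ((-1 : ℝ) ^ (j + k) * (r₁ ^ 2 / (4 * s)) ^ j * (r₂ ^ 2 / (4 * s)) ^ k *
        (r₁ * r₂ / (4 * s)) ^ ν *
        (((ν + j + k).factorial : ℝ) /
          (j.factorial * k.factorial * (ν + j).factorial * (ν + k).factorial))) := by
  have hs' : s ≠ 0 := ne_of_gt hs
  rw [show r₁ ^ 2 / (4 * s) = (r₁ / 2) ^ 2 / s by ring,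
    show r₂ ^ 2 / (4 * s) = (r₂ / 2) ^ 2 / s by ring,
    show r₁ * r₂ / (4 * s) = (r₁ / 2) * (r₂ / 2) / s by ring]
  generalize r₁ / 2 = a
  generalize r₂ / 2 = b
  have n1 : (j.factorial : ℝ) ≠ 0 := Nat.cast_ne_zero.2 (Nat.factorial_ne_zero _)
  have n2 : (k.factorial : ℝ) ≠ 0 := Nat.cast_ne_zero.2 (Nat.factorial_ne_zero _)
  have n3 : ((ν + j).factorial : ℝ) ≠ 0 := Nat.cast_ne_zero.2 (Nat.factorial_ne_zero _)
  have n4 : ((ν + k).factorial : ℝ) ≠ 0 := Nat.cast_ne_zero.2 (Nat.factorial_ne_zero _)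
  have hp1 : s ^ (ν + j + k + 1) ≠ 0 := pow_ne_zero _ hs'
  rw [div_pow, div_pow, div_pow]
  field_simp
  first | ring | exact Or.inl (by ring)

-- the same identity without the sign, for the norm computation
lemma final_term_abs (ν j k : ℕ) {s r₁ r₂ : ℝ} (hs : 0 < s) :
    ((r₁ / 2) ^ (ν + 2 * j) * (r₂ / 2) ^ (ν + 2 * k) /
        ((j.factorial : ℝ) * (ν + j).factorial * k.factorial * (ν + k).factorial)) *
      (((ν + j + k).factorial : ℝ) / (2 * s ^ (ν + j + k + 1)))
    = (r₁ * r₂ / (4 * s)) ^ ν / (2 * s) *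
        (((ν + j + k).factorial : ℝ) /
          ((j.factorial : ℝ) * (ν + j).factorial * k.factorial * (ν + k).factorial) *
          (r₁ ^ 2 / (4 * s)) ^ j * (r₂ ^ 2 / (4 * s)) ^ k) := by
  have hs' : s ≠ 0 := ne_of_gt hs
  rw [show r₁ ^ 2 / (4 * s) = (r₁ / 2) ^ 2 / s by ring,
    show r₂ ^ 2 / (4 * s) = (r₂ / 2) ^ 2 / s by ring,
    show r₁ * r₂ / (4 * s) = (r₁ / 2) * (r₂ / 2) / s by ring]
  generalize r₁ / 2 = a
  generalize r₂ / 2 = b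
  have n1 : (j.factorial : ℝ) ≠ 0 := Nat.cast_ne_zero.2 (Nat.factorial_ne_zero _)
  have n2 : (k.factorial : ℝ) ≠ 0 := Nat.cast_ne_zero.2 (Nat.factorial_ne_zero _)
  have n3 : ((ν + j).factorial : ℝ) ≠ 0 := Nat.cast_ne_zero.2 (Nat.factorial_ne_zero _)
  have n4 : ((ν + k).factorial : ℝ) ≠ 0 := Nat.cast_ne_zero.2 (Nat.factorial_ne_zero _)
  have hp1 : s ^ (ν + j + k + 1) ≠ 0 := pow_ne_zero _ hs'
  rw [div_pow, div_pow, div_pow]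
  field_simp
  first | ring | exact Or.inl (by ring)

lemma ptwise_term (ν j k : ℕ) (l r₁ r₂ es : ℝ) :
    (-1 : ℝ) ^ j / ((j.factorial : ℝ) * (ν + j).factorial) * (l * r₁ / 2) ^ (ν + 2 * j) *
      ((-1 : ℝ) ^ k / ((k.factorial : ℝ) * (ν + k).factorial) * (l * r₂ / 2) ^ (ν + 2 * k)) *
      (es * l) =
    (-1 : ℝ) ^ (j + k) *
      ((r₁ / 2) ^ (ν + 2 * j) * (r₂ / 2) ^ (ν + 2 * k) /
        ((j.factorial : ℝ) * (ν + j).factorial * k.factorial * (ν + k).factorial)) *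
      (es * l ^ (2 * (ν + j + k) + 1)) := by
  have n1 : (j.factorial : ℝ) ≠ 0 := Nat.cast_ne_zero.2 (Nat.factorial_ne_zero _)
  have n2 : (k.factorial : ℝ) ≠ 0 := Nat.cast_ne_zero.2 (Nat.factorial_ne_zero _)
  have n3 : ((ν + j).factorial : ℝ) ≠ 0 := Nat.cast_ne_zero.2 (Nat.factorial_ne_zero _)
  have n4 : ((ν + k).factorial : ℝ) ≠ 0 := Nat.cast_ne_zero.2 (Nat.factorial_ne_zero _)
  field_simp
  ring

-- pointwise expansion of the integrand as a double series
lemma pointwise_expand (ν : ℕ) (s r₁ r₂ l : ℝ) :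
    Real.exp (-s * l ^ 2) * besselJ ν (l * r₁) * besselJ ν (l * r₂) * l =
    ∑' p : ℕ × ℕ, (-1 : ℝ) ^ (p.1 + p.2) *
      ((r₁ / 2) ^ (ν + 2 * p.1) * (r₂ / 2) ^ (ν + 2 * p.2) /
        ((p.1.factorial : ℝ) * (ν + p.1).factorial * p.2.factorial * (ν + p.2).factorial)) *
      (Real.exp (-s * l ^ 2) * l ^ (2 * (ν + p.1 + p.2) + 1)) := by
  have hA := bessel_summable_norm ν (fun j => (-1 : ℝ) ^ j) (fun j => by simp) (l * r₁ / 2)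
  have hB := bessel_summable_norm ν (fun j => (-1 : ℝ) ^ j) (fun j => by simp) (l * r₂ / 2)
  rw [besselJ_nat, besselJ_nat]
  calc Real.exp (-s * l ^ 2) *
        (∑' j : ℕ, (-1 : ℝ) ^ j / (j.factorial * (ν + j).factorial) * (l * r₁ / 2) ^ (ν + 2 * j)) *
        (∑' k : ℕ, (-1 : ℝ) ^ k / (k.factorial * (ν + k).factorial) * (l * r₂ / 2) ^ (ν + 2 * k)) * l
      = ((∑' j : ℕ, (-1 : ℝ) ^ j / (j.factorial * (ν + j).factorial) * (l * r₁ / 2) ^ (ν + 2 * j)) *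
        (∑' k : ℕ, (-1 : ℝ) ^ k / (k.factorial * (ν + k).factorial) * (l * r₂ / 2) ^ (ν + 2 * k))) *
        (Real.exp (-s * l ^ 2) * l) := by ring
    _ = (∑' p : ℕ × ℕ,
          (-1 : ℝ) ^ p.1 / (p.1.factorial * (ν + p.1).factorial) * (l * r₁ / 2) ^ (ν + 2 * p.1) *
          ((-1 : ℝ) ^ p.2 / (p.2.factorial * (ν + p.2).factorial) * (l * r₂ / 2) ^ (ν + 2 * p.2))) *
        (Real.exp (-s * l ^ 2) * l) := by
        rw [tsum_mul_tsum_of_summable_norm hA hB]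
    _ = ∑' p : ℕ × ℕ,
          (-1 : ℝ) ^ p.1 / (p.1.factorial * (ν + p.1).factorial) * (l * r₁ / 2) ^ (ν + 2 * p.1) *
          ((-1 : ℝ) ^ p.2 / (p.2.factorial * (ν + p.2).factorial) * (l * r₂ / 2) ^ (ν + 2 * p.2)) *
          (Real.exp (-s * l ^ 2) * l) := (tsum_mul_right).symm
    _ = _ := tsum_congr fun p => ptwise_term ν p.1 p.2 l r₁ r₂ _

-- the inner (finite) sum over the diagonal
lemma weber_inner_sum {x y u : ℝ} (hu2 : u ^ 2 = x * y) (ν j k : ℕ) :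
    (∑' m : ℕ, if m ≤ j ∧ m ≤ k then
        (-x) ^ (j - m) / (j - m).factorial * ((-y) ^ (k - m) / (k - m).factorial) *
        (1 / (((m.factorial : ℝ)) * (ν + m).factorial) * u ^ (ν + 2 * m))
      else 0) =
    (-1 : ℝ) ^ (j + k) * x ^ j * y ^ k * u ^ ν *
      (((ν + j + k).factorial : ℝ) /
        (j.factorial * k.factorial * (ν + j).factorial * (ν + k).factorial)) := by
  rw [tsum_eq_sum (s := Finset.range (min j k + 1)) (fun m hm => by
    rw [Finset.mem_range] at hm
    rw [if_neg (by omega)])]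
  rw [Finset.sum_congr rfl (fun m hm => ?_), ← Finset.mul_sum, vmd ν j k]
  rw [Finset.mem_range, Nat.lt_succ_iff, le_min_iff] at hm
  obtain ⟨hmj, hmk⟩ := hm
  rw [if_pos ⟨hmj, hmk⟩]
  obtain ⟨a, rfl⟩ : ∃ a, j = a + m := ⟨j - m, by omega⟩
  obtain ⟨b, rfl⟩ : ∃ b, k = b + m := ⟨k - m, by omega⟩
  rw [Nat.add_sub_cancel, Nat.add_sub_cancel]
  rw [F_term_eval hu2 ν a b m]

noncomputable def wG (ν : ℕ) (x y u : ℝ) (z : (ℕ × ℕ) × ℕ) : ℝ :=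
  (-x) ^ z.1.1 / (z.1.1.factorial : ℝ) * ((-y) ^ z.1.2 / (z.1.2.factorial : ℝ)) *
    (1 / ((z.2.factorial : ℝ) * (ν + z.2).factorial) * u ^ (ν + 2 * z.2))

noncomputable def wF (ν : ℕ) (x y u : ℝ) (q : (ℕ × ℕ) × ℕ) : ℝ :=
  if q.2 ≤ q.1.1 ∧ q.2 ≤ q.1.2 then wG ν x y u ((q.1.1 - q.2, q.1.2 - q.2), q.2) else 0

def wi (t : (ℕ × ℕ) × ℕ) : (ℕ × ℕ) × ℕ := ((t.1.1 + t.2, t.1.2 + t.2), t.2)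

lemma wi_inj : Function.Injective wi := by
  rintro ⟨⟨a1, a2⟩, a3⟩ ⟨⟨b1, b2⟩, b3⟩ h
  simp only [wi, Prod.mk.injEq] at h
  obtain ⟨⟨h1, h2⟩, h3⟩ := h
  subst h3
  refine Prod.ext (Prod.ext ?_ ?_) rfl <;> simp <;> omega

lemma wF_wi (ν : ℕ) (x y u : ℝ) (t : (ℕ × ℕ) × ℕ) : wF ν x y u (wi t) = wG ν x y u t := by
  unfold wF wi
  rw [if_pos ⟨Nat.le_add_left _ _, Nat.le_add_left _ _⟩]
  simp [Nat.add_sub_cancel]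

lemma wF_supp (ν : ℕ) (x y u : ℝ) :
    Function.support (wF ν x y u) ⊆ Set.range wi := by
  rintro ⟨⟨j, k⟩, m⟩ hq
  by_cases hc : m ≤ j ∧ m ≤ k
  · refine ⟨((j - m, k - m), m), ?_⟩
    simp only [wi, Prod.mk.injEq]
    refine ⟨⟨by omega, by omega⟩, trivial⟩
  · exfalso
    apply hq
    unfold wF
    rw [if_neg hc]

lemma wG_summable (ν : ℕ) (x y u : ℝ) : Summable (wG ν x y u) := by
  have hfaN : Summable fun a : ℕ => ‖(-x) ^ a / (a.factorial : ℝ)‖ := by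
    refine Summable.of_nonneg_of_le (fun _ => norm_nonneg _) (fun a => ?_)
      (Real.summable_pow_div_factorial |x|)
    rw [norm_div, norm_pow, norm_neg, Real.norm_eq_abs, Real.norm_eq_abs,
      abs_of_nonneg (show (0:ℝ) ≤ ((Nat.factorial _ : ℕ) : ℝ) from Nat.cast_nonneg _)]
  have hfbN : Summable fun b : ℕ => ‖(-y) ^ b / (b.factorial : ℝ)‖ := by
    refine Summable.of_nonneg_of_le (fun _ => norm_nonneg _) (fun a => ?_)
      (Real.summable_pow_div_factorial |y|)
    rw [norm_div, norm_pow, norm_neg, Real.norm_eq_abs, Real.norm_eq_abs,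
      abs_of_nonneg (show (0:ℝ) ≤ ((Nat.factorial _ : ℕ) : ℝ) from Nat.cast_nonneg _)]
  have hfmN : Summable fun m : ℕ =>
      ‖1 / ((m.factorial : ℝ) * (ν + m).factorial) * u ^ (ν + 2 * m)‖ :=
    bessel_summable_norm ν (fun _ => 1) (fun _ => by simp) u
  exact ((hfaN.mul_norm hfbN).mul_norm hfmN).of_norm

lemma wF_summable (ν : ℕ) (x y u : ℝ) : Summable (wF ν x y u) := by
  have h0 : ∀ q ∉ Set.range wi, wF ν x y u q = 0 := by
    intro q hq
    by_contra h
    exact hq (wF_supp ν x y u h)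
  exact (wi_inj.summable_iff h0).mp
    ((wG_summable ν x y u).congr fun t => (wF_wi ν x y u t).symm)

lemma wFG_tsum (ν : ℕ) (x y u : ℝ) : ∑' q, wF ν x y u q = ∑' t, wG ν x y u t := by
  have h0 : ∀ q ∉ Set.range wi, wF ν x y u q = 0 := by
    intro q hq
    by_contra h
    exact hq (wF_supp ν x y u h)
  rw [← wi_inj.tsum_eq (wF_supp ν x y u)]
  exact tsum_congr (wF_wi ν x y u)

lemma rhs_expand (ν : ℕ) {x y u : ℝ} (hu2 : u ^ 2 = x * y) :
    Real.exp (-x) * Real.exp (-y) *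
      (∑' m : ℕ, 1 / ((m.factorial : ℝ) * (ν + m).factorial) * u ^ (ν + 2 * m)) =
    ∑' p : ℕ × ℕ, (-1 : ℝ) ^ (p.1 + p.2) * x ^ p.1 * y ^ p.2 * u ^ ν *
      (((ν + p.1 + p.2).factorial : ℝ) /
        (p.1.factorial * p.2.factorial * (ν + p.1).factorial * (ν + p.2).factorial)) := by
  have expser : ∀ t : ℝ, Real.exp t = ∑' n : ℕ, t ^ n / n.factorial := fun t => by
    rw [Real.exp_eq_exp_ℝ, NormedSpace.exp_eq_tsum_div]
  have hfaN : Summable fun a : ℕ => ‖(-x) ^ a / (a.factorial : ℝ)‖ := by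
    refine Summable.of_nonneg_of_le (fun _ => norm_nonneg _) (fun a => ?_)
      (Real.summable_pow_div_factorial |x|)
    rw [norm_div, norm_pow, norm_neg, Real.norm_eq_abs, Real.norm_eq_abs,
      abs_of_nonneg (show (0:ℝ) ≤ ((Nat.factorial _ : ℕ) : ℝ) from Nat.cast_nonneg _)]
  have hfbN : Summable fun b : ℕ => ‖(-y) ^ b / (b.factorial : ℝ)‖ := by
    refine Summable.of_nonneg_of_le (fun _ => norm_nonneg _) (fun a => ?_)
      (Real.summable_pow_div_factorial |y|)
    rw [norm_div, norm_pow, norm_neg, Real.norm_eq_abs, Real.norm_eq_abs,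
      abs_of_nonneg (show (0:ℝ) ≤ ((Nat.factorial _ : ℕ) : ℝ) from Nat.cast_nonneg _)]
  have hfmN : Summable fun m : ℕ =>
      ‖1 / ((m.factorial : ℝ) * (ν + m).factorial) * u ^ (ν + 2 * m)‖ :=
    bessel_summable_norm ν (fun _ => 1) (fun _ => by simp) u
  have habN : Summable fun p : ℕ × ℕ =>
      ‖(-x) ^ p.1 / (p.1.factorial : ℝ) * ((-y) ^ p.2 / (p.2.factorial : ℝ))‖ :=
    hfaN.mul_norm hfbN
  rw [expser (-x), expser (-y)]
  rw [tsum_mul_tsum_of_summable_norm hfaN hfbN]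
  rw [tsum_mul_tsum_of_summable_norm habN hfmN]
  calc (∑' z : (ℕ × ℕ) × ℕ,
        (-x) ^ z.1.1 / (z.1.1.factorial : ℝ) * ((-y) ^ z.1.2 / (z.1.2.factorial : ℝ)) *
          (1 / ((z.2.factorial : ℝ) * (ν + z.2).factorial) * u ^ (ν + 2 * z.2)))
      = ∑' t, wG ν x y u t := tsum_congr fun t => rfl
    _ = ∑' q, wF ν x y u q := (wFG_tsum ν x y u).symm
    _ = ∑' p : ℕ × ℕ, ∑' m : ℕ, wF ν x y u (p, m) :=
        Summable.tsum_prod' (wF_summable ν x y u) fun p => (wF_summable ν x y u).prod_factor p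
    _ = _ := by
        refine tsum_congr fun p => ?_
        calc (∑' m : ℕ, wF ν x y u (p, m))
            = ∑' m : ℕ, (if m ≤ p.1 ∧ m ≤ p.2 then
                (-x) ^ (p.1 - m) / (p.1 - m).factorial *
                  ((-y) ^ (p.2 - m) / (p.2 - m).factorial) *
                (1 / (((m.factorial : ℝ)) * (ν + m).factorial) * u ^ (ν + 2 * m))
              else 0) := tsum_congr fun m => by simp only [wF, wG]
          _ = _ := weber_inner_sum hu2 ν p.1 p.2

/-- Weber's second exponential integral: for `s > 0`, `r₁, r₂ > 0` and integer
order `ν ≥ 0`,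
`∫_0^∞ e^{-sλ²} J_ν(λr₁) J_ν(λr₂) λ dλ = (1/(2s)) e^{-(r₁²+r₂²)/(4s)} I_ν(r₁r₂/(2s))`. -/
theorem weber_second_exponential_integral (s r₁ r₂ : ℝ) (hs : 0 < s)
    (hr₁ : 0 < r₁) (hr₂ : 0 < r₂) (ν : ℕ) :
    (∫ l in Set.Ioi (0 : ℝ),
        Real.exp (-s * l ^ 2) * besselJ ν (l * r₁) * besselJ ν (l * r₂) * l) =
      1 / (2 * s) * Real.exp (-(r₁ ^ 2 + r₂ ^ 2) / (4 * s)) *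
        besselI ν (r₁ * r₂ / (2 * s)) := by
  have hs' : s ≠ 0 := ne_of_gt hs
  have hx : (0 : ℝ) ≤ r₁ ^ 2 / (4 * s) := by positivity
  have hy : (0 : ℝ) ≤ r₂ ^ 2 / (4 * s) := by positivity
  have hu2 : (r₁ * r₂ / (4 * s)) ^ 2 = r₁ ^ 2 / (4 * s) * (r₂ ^ 2 / (4 * s)) := by
    field_simp
  have hintg : ∀ p : ℕ × ℕ, IntegrableOn (fun l : ℝ =>
      (-1 : ℝ) ^ (p.1 + p.2) *
        ((r₁ / 2) ^ (ν + 2 * p.1) * (r₂ / 2) ^ (ν + 2 * p.2) /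
          ((p.1.factorial : ℝ) * (ν + p.1).factorial * p.2.factorial * (ν + p.2).factorial)) *
        (Real.exp (-s * l ^ 2) * l ^ (2 * (ν + p.1 + p.2) + 1))) (Set.Ioi 0) := fun p =>
    (moment_integrableOn hs _).const_mul _
  have hmeas : ∀ p : ℕ × ℕ, AEStronglyMeasurable (fun l : ℝ =>
      (-1 : ℝ) ^ (p.1 + p.2) *
        ((r₁ / 2) ^ (ν + 2 * p.1) * (r₂ / 2) ^ (ν + 2 * p.2) /
          ((p.1.factorial : ℝ) * (ν + p.1).factorial * p.2.factorial * (ν + p.2).factorial)) *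
        (Real.exp (-s * l ^ 2) * l ^ (2 * (ν + p.1 + p.2) + 1)))
      (volume.restrict (Set.Ioi 0)) := fun p => (hintg p).aestronglyMeasurable
  have hnormint : ∀ p : ℕ × ℕ, (∫⁻ l, ‖(-1 : ℝ) ^ (p.1 + p.2) *
        ((r₁ / 2) ^ (ν + 2 * p.1) * (r₂ / 2) ^ (ν + 2 * p.2) /
          ((p.1.factorial : ℝ) * (ν + p.1).factorial * p.2.factorial * (ν + p.2).factorial)) *
        (Real.exp (-s * l ^ 2) * l ^ (2 * (ν + p.1 + p.2) + 1))‖₊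
        ∂(volume.restrict (Set.Ioi 0))) =
      ENNReal.ofReal ((r₁ * r₂ / (4 * s)) ^ ν / (2 * s) *
        (((ν + p.1 + p.2).factorial : ℝ) /
          ((p.1.factorial : ℝ) * (ν + p.1).factorial * p.2.factorial * (ν + p.2).factorial) *
          (r₁ ^ 2 / (4 * s)) ^ p.1 * (r₂ ^ 2 / (4 * s)) ^ p.2)) := by
    intro p
    simp_rw [← enorm_eq_nnnorm]
    rw [← ofReal_integral_norm_eq_lintegral_enorm (hintg p)]
    congr 1
    have habs : ∀ l ∈ Set.Ioi (0 : ℝ), ‖(-1 : ℝ) ^ (p.1 + p.2) *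
        ((r₁ / 2) ^ (ν + 2 * p.1) * (r₂ / 2) ^ (ν + 2 * p.2) /
          ((p.1.factorial : ℝ) * (ν + p.1).factorial * p.2.factorial * (ν + p.2).factorial)) *
        (Real.exp (-s * l ^ 2) * l ^ (2 * (ν + p.1 + p.2) + 1))‖ =
        ((r₁ / 2) ^ (ν + 2 * p.1) * (r₂ / 2) ^ (ν + 2 * p.2) /
          ((p.1.factorial : ℝ) * (ν + p.1).factorial * p.2.factorial * (ν + p.2).factorial)) *
        (Real.exp (-s * l ^ 2) * l ^ (2 * (ν + p.1 + p.2) + 1)) := by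
      intro l hl
      have hl' : (0 : ℝ) < l := hl
      rw [Real.norm_eq_abs, abs_mul, abs_mul, abs_pow, abs_neg, abs_one, one_pow, one_mul,
        abs_of_nonneg (show (0 : ℝ) ≤ (r₁ / 2) ^ (ν + 2 * p.1) * (r₂ / 2) ^ (ν + 2 * p.2) /
          ((p.1.factorial : ℝ) * (ν + p.1).factorial * p.2.factorial * (ν + p.2).factorial) by
            positivity),
        abs_of_nonneg (mul_nonneg (Real.exp_nonneg _) (pow_nonneg hl'.le _))]
    calc ∫ l in Set.Ioi (0 : ℝ), ‖(-1 : ℝ) ^ (p.1 + p.2) *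
          ((r₁ / 2) ^ (ν + 2 * p.1) * (r₂ / 2) ^ (ν + 2 * p.2) /
            ((p.1.factorial : ℝ) * (ν + p.1).factorial * p.2.factorial * (ν + p.2).factorial)) *
          (Real.exp (-s * l ^ 2) * l ^ (2 * (ν + p.1 + p.2) + 1))‖
        = ∫ l in Set.Ioi (0 : ℝ),
            ((r₁ / 2) ^ (ν + 2 * p.1) * (r₂ / 2) ^ (ν + 2 * p.2) /
              ((p.1.factorial : ℝ) * (ν + p.1).factorial * p.2.factorial * (ν + p.2).factorial)) *
            (Real.exp (-s * l ^ 2) * l ^ (2 * (ν + p.1 + p.2) + 1)) :=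
          setIntegral_congr_fun measurableSet_Ioi habs
      _ = ((r₁ / 2) ^ (ν + 2 * p.1) * (r₂ / 2) ^ (ν + 2 * p.2) /
              ((p.1.factorial : ℝ) * (ν + p.1).factorial * p.2.factorial * (ν + p.2).factorial)) *
            ∫ l in Set.Ioi (0 : ℝ), Real.exp (-s * l ^ 2) * l ^ (2 * (ν + p.1 + p.2) + 1) :=
          integral_const_mul _ _
      _ = ((r₁ / 2) ^ (ν + 2 * p.1) * (r₂ / 2) ^ (ν + 2 * p.2) /
              ((p.1.factorial : ℝ) * (ν + p.1).factorial * p.2.factorial * (ν + p.2).factorial)) *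
            (((ν + p.1 + p.2).factorial : ℝ) / (2 * s ^ (ν + p.1 + p.2 + 1))) := by
          rw [moment_eq hs]
      _ = _ := final_term_abs ν p.1 p.2 hs
  have hMsum : Summable (fun p : ℕ × ℕ => (r₁ * r₂ / (4 * s)) ^ ν / (2 * s) *
      (((ν + p.1 + p.2).factorial : ℝ) /
        ((p.1.factorial : ℝ) * (ν + p.1).factorial * p.2.factorial * (ν + p.2).factorial) *
        (r₁ ^ 2 / (4 * s)) ^ p.1 * (r₂ ^ 2 / (4 * s)) ^ p.2)) :=
    (bigSummable ν hx hy).mul_left _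
  have hlint : (∑' p : ℕ × ℕ, ∫⁻ l, ‖(-1 : ℝ) ^ (p.1 + p.2) *
        ((r₁ / 2) ^ (ν + 2 * p.1) * (r₂ / 2) ^ (ν + 2 * p.2) /
          ((p.1.factorial : ℝ) * (ν + p.1).factorial * p.2.factorial * (ν + p.2).factorial)) *
        (Real.exp (-s * l ^ 2) * l ^ (2 * (ν + p.1 + p.2) + 1))‖₊
        ∂(volume.restrict (Set.Ioi 0))) ≠ ⊤ := by
    calc (∑' p : ℕ × ℕ, ∫⁻ l, ‖(-1 : ℝ) ^ (p.1 + p.2) *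
        ((r₁ / 2) ^ (ν + 2 * p.1) * (r₂ / 2) ^ (ν + 2 * p.2) /
          ((p.1.factorial : ℝ) * (ν + p.1).factorial * p.2.factorial * (ν + p.2).factorial)) *
        (Real.exp (-s * l ^ 2) * l ^ (2 * (ν + p.1 + p.2) + 1))‖₊
        ∂(volume.restrict (Set.Ioi 0)))
        = ∑' p : ℕ × ℕ, ENNReal.ofReal ((r₁ * r₂ / (4 * s)) ^ ν / (2 * s) *
            (((ν + p.1 + p.2).factorial : ℝ) /
              ((p.1.factorial : ℝ) * (ν + p.1).factorial * p.2.factorial * (ν + p.2).factorial) *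
              (r₁ ^ 2 / (4 * s)) ^ p.1 * (r₂ ^ 2 / (4 * s)) ^ p.2)) := tsum_congr hnormint
      _ = ENNReal.ofReal (∑' p : ℕ × ℕ, (r₁ * r₂ / (4 * s)) ^ ν / (2 * s) *
            (((ν + p.1 + p.2).factorial : ℝ) /
              ((p.1.factorial : ℝ) * (ν + p.1).factorial * p.2.factorial * (ν + p.2).factorial) *
              (r₁ ^ 2 / (4 * s)) ^ p.1 * (r₂ ^ 2 / (4 * s)) ^ p.2)) :=
          (ENNReal.ofReal_tsum_of_nonneg (fun p => by positivity) hMsum).symm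
      _ ≠ ⊤ := ENNReal.ofReal_ne_top
  calc (∫ l in Set.Ioi (0 : ℝ),
        Real.exp (-s * l ^ 2) * besselJ ν (l * r₁) * besselJ ν (l * r₂) * l)
      = ∫ l in Set.Ioi (0 : ℝ), ∑' p : ℕ × ℕ, (-1 : ℝ) ^ (p.1 + p.2) *
          ((r₁ / 2) ^ (ν + 2 * p.1) * (r₂ / 2) ^ (ν + 2 * p.2) /
            ((p.1.factorial : ℝ) * (ν + p.1).factorial * p.2.factorial * (ν + p.2).factorial)) *
          (Real.exp (-s * l ^ 2) * l ^ (2 * (ν + p.1 + p.2) + 1)) :=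
        setIntegral_congr_fun measurableSet_Ioi fun l _ => pointwise_expand ν s r₁ r₂ l
    _ = ∑' p : ℕ × ℕ, ∫ l in Set.Ioi (0 : ℝ), (-1 : ℝ) ^ (p.1 + p.2) *
          ((r₁ / 2) ^ (ν + 2 * p.1) * (r₂ / 2) ^ (ν + 2 * p.2) /
            ((p.1.factorial : ℝ) * (ν + p.1).factorial * p.2.factorial * (ν + p.2).factorial)) *
          (Real.exp (-s * l ^ 2) * l ^ (2 * (ν + p.1 + p.2) + 1)) :=
        integral_tsum hmeas hlint
    _ = ∑' p : ℕ × ℕ, (-1 : ℝ) ^ (p.1 + p.2) *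
          ((r₁ / 2) ^ (ν + 2 * p.1) * (r₂ / 2) ^ (ν + 2 * p.2) /
            ((p.1.factorial : ℝ) * (ν + p.1).factorial * p.2.factorial * (ν + p.2).factorial)) *
          (((ν + p.1 + p.2).factorial : ℝ) / (2 * s ^ (ν + p.1 + p.2 + 1))) :=
        tsum_congr fun p => by rw [integral_const_mul, moment_eq hs]
    _ = 1 / (2 * s) * Real.exp (-(r₁ ^ 2 + r₂ ^ 2) / (4 * s)) *
          besselI ν (r₁ * r₂ / (2 * s)) := by
        rw [besselI_nat]
        simp only [show r₁ * r₂ / (2 * s) / 2 = r₁ * r₂ / (4 * s) from by ring]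
        rw [show -(r₁ ^ 2 + r₂ ^ 2) / (4 * s) = -(r₁ ^ 2 / (4 * s)) + -(r₂ ^ 2 / (4 * s))
          from by ring, Real.exp_add]
        rw [mul_assoc (1 / (2 * s)), rhs_expand ν hu2, ← tsum_mul_left]
        exact tsum_congr fun p => final_term ν p.1 p.2 hs
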